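/- For the solvable Lie algebra [e₄,e₁]=e₁, [e₄,e₂]=e₂, [e₄,e₃]=e₃, with the standard hypercomplex structure and metric g(x,y)=x¹y¹+x²y²-x³y³-x⁴y⁴, the only nonzero Lee form components are θ₁(e₃) = -2, θ₂(e₂) = -4, θ₃(e₁) = 4, and these satisfy the identity θ₂∘J₂ = θ₃∘J₃ = -2(θ₁∘J₁). -/
import Mathlib


noncomputable section

/-- The underlying 4-dimensional real vector space. -/
abbrev V : Type := Fin 4 → ℝ

/-- The standard basis of ℝ⁴. -/
def e : Fin 4 → V := fun i => Pi.single i 1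

/-- The neutral metric g(x,y) = x¹y¹ + x²y² - x³y³ - x⁴y⁴. -/
def g (x y : V) : ℝ := x 0 * y 0 + x 1 * y 1 - x 2 * y 2 - x 3 * y 3

/-- J₁ of the standard hypercomplex structure. -/
def J1 (x : V) : V := ![-x 1, x 0, x 3, -x 2]

/-- J₂ of the standard hypercomplex structure. -/
def J2 (x : V) : V := ![-x 2, -x 3, x 0, x 1]

/-- J₃ of the standard hypercomplex structure. -/
def J3 (x : V) : V := ![x 3, -x 2, x 1, -x 0]

/-- The bracket of type (hc4), second case: [e₄,e₁]=e₁, [e₄,e₂]=e₂, [e₄,e₃]=e₃. -/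
def br (x y : V) : V :=
  ![x 3 * y 0 - x 0 * y 3, x 3 * y 1 - x 1 * y 3, x 3 * y 2 - x 2 * y 3, 0]


/-- Structure tensor F(x,y,z) = g((∇ₓJ)y, z) = g(∇ₓ(Jy) - J(∇ₓy), z). -/
def F (J : V → V) (nabla : V → V → V) (x y z : V) : ℝ :=
  g (nabla x (J y) - J (nabla x y)) z

/-- Lee form θ(z) = Σᵢ gⁱⁱ F(eᵢ,eᵢ,z) with gⁱⁱ = (1,1,-1,-1). -/
def theta (J : V → V) (nabla : V → V → V) (z : V) : ℝ :=
  F J nabla (e 0) (e 0) z + F J nabla (e 1) (e 1) z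
    - F J nabla (e 2) (e 2) z - F J nabla (e 3) (e 3) z
lemma nabla_formula (nabla : V → V → V)
    (hK : ∀ x y z : V,
      2 * g (nabla x y) z = g (br x y) z + g (br z x) y + g (br z y) x) :
    ∀ x y : V, nabla x y =
      ![-(x 0 * y 3), -(x 1 * y 3), -(x 2 * y 3),
        -(x 0 * y 0 + x 1 * y 1 - x 2 * y 2)] := by
  intro x y
  have h0 := hK x y (e 0)
  have h1 := hK x y (e 1)
  have h2 := hK x y (e 2)
  have h3 := hK x y (e 3)
  simp [g, br, e, Pi.single_apply] at h0 h1 h2 h3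
  funext j
  fin_cases j <;> simp <;> linarith

/-- Lee forms of the (hc4b) structure: θ₁(e₃)=-2, θ₂(e₂)=-4, θ₃(e₁)=4 are the
only nonzero components, and θ₂∘J₂ = θ₃∘J₃ = -2(θ₁∘J₁). -/
theorem hc4b_lee_forms (nabla : V → V → V)
    (hK : ∀ x y z : V,
      2 * g (nabla x y) z = g (br x y) z + g (br z x) y + g (br z y) x) :
    (∀ i : Fin 4, theta J1 nabla (e i) = if i = 2 then -2 else 0) ∧
    (∀ i : Fin 4, theta J2 nabla (e i) = if i = 1 then -4 else 0) ∧
    (∀ i : Fin 4, theta J3 nabla (e i) = if i = 0 then 4 else 0) ∧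
    (∀ z : V, theta J2 nabla (J2 z) = theta J3 nabla (J3 z)) ∧
    (∀ z : V, theta J3 nabla (J3 z) = -2 * theta J1 nabla (J1 z)) := by
  have hn := nabla_formula nabla hK
  refine ⟨?_, ?_, ?_, ?_, ?_⟩
  · intro i; fin_cases i <;>
      simp [theta, F, hn, g, J1, e, Pi.single_apply] <;> norm_num
  · intro i; fin_cases i <;>
      simp [theta, F, hn, g, J2, e, Pi.single_apply] <;> norm_num
  · intro i; fin_cases i <;>
      simp [theta, F, hn, g, J3, e, Pi.single_apply] <;> norm_num
  · intro z
    simp [theta, F, hn, g, J2, J3, e, Pi.single_apply]; ring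
  · intro z
    simp [theta, F, hn, g, J1, J3, e, Pi.single_apply]; ring
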